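/- For the sticky random walk X on {0,...,N+1} with boundary rates 1/(2M), the transition probability from N+1 to 0 in time t satisfies p_t(N+1, 0) ≤ t/(2MN). -/

import Mathlib

/-- Jump rates of the sticky random walk on `{0,…,N+1}`: rate `1/2` between nearest
neighbours in the bulk `{1,…,N}`, and rate `1/(2M)` from the boundary sites `0` and `N+1`
to their unique neighbours. -/
noncomputable def stickyRate (N : ℕ) (M : ℝ) (x y : Fin (N + 2)) : ℝ :=
  if 1 ≤ (x : ℕ) ∧ (x : ℕ) ≤ N ∧ ((y : ℕ) = (x : ℕ) + 1 ∨ (y : ℕ) + 1 = (x : ℕ)) then 1 / 2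
  else if (x : ℕ) = 0 ∧ (y : ℕ) = 1 then 1 / (2 * M)
  else if (x : ℕ) = N + 1 ∧ (y : ℕ) = N then 1 / (2 * M)
  else 0

/-- Generator matrix of the sticky random walk. -/
noncomputable def stickyGen (N : ℕ) (M : ℝ) : Matrix (Fin (N + 2)) (Fin (N + 2)) ℝ :=
  Matrix.of fun x y =>
    if x = y then -(∑ z, stickyRate N M x z) else stickyRate N M x y

open NormedSpace
open scoped Matrix Nat

section General

attribute [local instance] Matrix.linftyOpSemiNormedRing Matrix.linftyOpNormedRing
  Matrix.linftyOpNormedAlgebra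

variable {ι : Type*} [Fintype ι] [DecidableEq ι]

/-- evaluation of `A *ᵥ v` at `x`, as a continuous linear map in `A`. -/
noncomputable def evalCLM (v : ι → ℝ) (x : ι) : Matrix ι ι ℝ →L[ℝ] ℝ where
  toFun A := (A *ᵥ v) x
  map_add' A B := by simp [Matrix.add_mulVec]
  map_smul' c A := by simp [Matrix.smul_mulVec]
  cont := by
    show Continuous fun A : Matrix ι ι ℝ => ∑ y, A x y * v y
    exact continuous_finset_sum _ fun y _ =>
      (continuous_id.matrix_elem x y).mul continuous_const

theorem exp_mulVec_eq (A : Matrix ι ι ℝ) (v : ι → ℝ) (x : ι) :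
    (exp A *ᵥ v) x = ∑' k : ℕ, (k ! : ℝ)⁻¹ • ((A ^ k *ᵥ v) x) := by
  have hs : Summable fun k : ℕ => (k !⁻¹ : ℝ) • A ^ k := expSeries_summable' (𝕂 := ℝ) A
  have h2 := (evalCLM (ι := ι) v x).map_tsum hs
  have h3 : exp A = ∑' k : ℕ, (k !⁻¹ : ℝ) • A ^ k := by
    rw [exp_eq_tsum ℝ]
  rw [h3]
  show evalCLM v x _ = _
  rw [h2]
  congr 1
  ext k
  rw [map_smul]
  rfl

theorem summable_exp_term (A : Matrix ι ι ℝ) (v : ι → ℝ) (x : ι) :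
    Summable fun k : ℕ => (k ! : ℝ)⁻¹ • ((A ^ k *ᵥ v) x) := by
  have hs : Summable fun k : ℕ => (k !⁻¹ : ℝ) • A ^ k := expSeries_summable' (𝕂 := ℝ) A
  have h := hs.mapL (evalCLM (ι := ι) v x)
  have he : (fun k : ℕ => evalCLM (ι := ι) v x ((k !⁻¹ : ℝ) • A ^ k))
      = fun k : ℕ => (k ! : ℝ)⁻¹ • ((A ^ k *ᵥ v) x) := by
    ext k
    rw [map_smul]
    rfl
  rwa [he] at h

theorem mulVec_single_entry (B : Matrix ι ι ℝ) (i j : ι) :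
    (B *ᵥ Pi.single j 1) i = B i j := by
  simp [Matrix.mulVec_single]

theorem pow_entry_nonneg {A : Matrix ι ι ℝ} (hA : ∀ i j, 0 ≤ A i j) (k : ℕ) :
    ∀ i j, 0 ≤ (A ^ k) i j := by
  induction k with
  | zero =>
    intro i j
    rw [pow_zero]
    by_cases h : i = j <;> simp [Matrix.one_apply, h]
  | succ n ih =>
    intro i j
    rw [pow_succ, Matrix.mul_apply]
    exact Finset.sum_nonneg fun y _ => mul_nonneg (ih i y) (hA y j)

theorem exp_entry_nonneg_of_nonneg {A : Matrix ι ι ℝ} (hA : ∀ i j, 0 ≤ A i j) (i j : ι) :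
    0 ≤ exp A i j := by
  have h := exp_mulVec_eq A (Pi.single j 1) i
  rw [mulVec_single_entry] at h
  rw [h]
  refine tsum_nonneg fun k => smul_nonneg (by positivity) ?_
  rw [mulVec_single_entry]
  exact pow_entry_nonneg hA k i j

theorem exp_entry_nonneg {A : Matrix ι ι ℝ} (hA : ∀ i j, i ≠ j → 0 ≤ A i j)
    {t : ℝ} (ht : 0 ≤ t) (i j : ι) : 0 ≤ exp (t • A) i j := by
  set c : ℝ := ∑ k, |A k k| with hc
  have hc0 : 0 ≤ c := Finset.sum_nonneg fun _ _ => abs_nonneg _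
  have hB : ∀ i j, 0 ≤ (t • (A + c • (1 : Matrix ι ι ℝ))) i j := by
    intro i j
    refine mul_nonneg ht ?_
    by_cases h : i = j
    · subst h
      have h1 : |A i i| ≤ c :=
        Finset.single_le_sum (f := fun k => |A k k|) (fun k _ => abs_nonneg _)
          (Finset.mem_univ i)
      have h2 : -A i i ≤ |A i i| := neg_le_abs _
      simp only [Matrix.add_apply, Matrix.smul_apply, Matrix.one_apply_eq, smul_eq_mul, mul_one]
      linarith
    · simp only [Matrix.add_apply, Matrix.smul_apply, Matrix.one_apply_ne h, smul_eq_mul,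
        mul_zero, add_zero]
      exact hA i j h
  have hsplit : t • A = t • (A + c • (1 : Matrix ι ι ℝ)) + Matrix.diagonal (fun _ => -(t * c)) := by
    rw [← Matrix.smul_one_eq_diagonal, smul_add, smul_smul]
    module
  have hcomm : Commute (t • (A + c • (1 : Matrix ι ι ℝ)))
      (Matrix.diagonal (fun _ => -(t * c))) := by
    rw [← Matrix.smul_one_eq_diagonal]
    exact ((Commute.one_right _).smul_right _)
  rw [hsplit, Matrix.exp_add_of_commute _ _ hcomm, Matrix.exp_diagonal, Matrix.mul_apply]
  refine Finset.sum_nonneg fun y _ => mul_nonneg ?_ ?_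
  · exact exp_entry_nonneg_of_nonneg hB i y
  · rw [Matrix.diagonal_apply]
    split
    · rw [Pi.coe_exp, ← Real.exp_eq_exp_ℝ]
      exact (Real.exp_pos _).le
    · exact le_refl 0

theorem comparison (Q : Matrix ι ι ℝ) (hQ : ∀ i j, i ≠ j → 0 ≤ Q i j)
    (a b : ι → ℝ) (x0 : ι) (ha : ∀ i, 0 ≤ a i) (ha0 : 1 ≤ a x0)
    (hr : ∀ i, (Q *ᵥ a) i ≤ b i) (hb : Q *ᵥ b = 0)
    {t : ℝ} (ht : 0 ≤ t) (x : ι) :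
    exp (t • Q) x x0 ≤ a x + t * b x := by
  classical
  set e0 : ι → ℝ := Pi.single x0 1 with he0
  set r : ι → ℝ := b - Q *ᵥ a with hrdef
  set B : Matrix ι Unit ℝ := Matrix.of fun i (_ : Unit) => r i with hB
  set Qt : Matrix (ι ⊕ Unit) (ι ⊕ Unit) ℝ := Matrix.fromBlocks Q B 0 0 with hQt
  set vt : (ι ⊕ Unit) → ℝ := Sum.elim (a - e0) (fun _ => 1) with hvt
  -- basic block computations
  have hBone : B *ᵥ (fun _ : Unit => (1:ℝ)) = r := by
    funext i
    simp [hB, Matrix.mulVec, dotProduct]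
  have hBzero : B *ᵥ (fun _ : Unit => (0:ℝ)) = 0 := by
    funext i
    simp [hB, Matrix.mulVec, dotProduct]
  have h1 : Qt *ᵥ vt = Sum.elim (b - Q *ᵥ e0) (fun _ => (0:ℝ)) := by
    funext p
    rcases p with i | u
    · show ∑ q, Qt (Sum.inl i) q * vt q = _
      rw [Fintype.sum_sum_type]
      simp only [hQt, hvt, Matrix.fromBlocks_apply₁₁, Matrix.fromBlocks_apply₁₂,
        Sum.elim_inl, Sum.elim_inr, Pi.sub_apply, Fintype.sum_unique, hB, Matrix.of_apply,
        mul_one, hrdef]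
      have hQa : (Q *ᵥ a) i = ∑ j, Q i j * a j := rfl
      have hQe : (Q *ᵥ e0) i = ∑ j, Q i j * e0 j := rfl
      simp only [Pi.sub_apply, hQa, hQe, mul_sub, Finset.sum_sub_distrib]
      ring
    · show ∑ q, Qt (Sum.inr u) q * vt q = _
      rw [Fintype.sum_sum_type]
      simp [hQt]
  have h2 : ∀ w : ι → ℝ, Qt *ᵥ (Sum.elim w (fun _ => (0:ℝ)))
      = Sum.elim (Q *ᵥ w) (fun _ => (0:ℝ)) := by
    intro w
    funext p
    rcases p with i | u
    · show ∑ q, Qt (Sum.inl i) q * (Sum.elim w (fun _ => (0:ℝ))) q = _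
      rw [Fintype.sum_sum_type]
      simp only [hQt, Matrix.fromBlocks_apply₁₁, Matrix.fromBlocks_apply₁₂,
        Sum.elim_inl, Sum.elim_inr, Fintype.sum_unique, mul_zero, Finset.sum_const_zero,
        add_zero]
      rfl
    · show ∑ q, Qt (Sum.inr u) q * (Sum.elim w (fun _ => (0:ℝ))) q = _
      rw [Fintype.sum_sum_type]
      simp [hQt]
  have h3 : ∀ k : ℕ, Qt ^ (k + 2) *ᵥ vt
      = Sum.elim (-(Q ^ (k + 2) *ᵥ e0)) (fun _ => (0:ℝ)) := by
    intro k
    induction k with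
    | zero =>
      have : Qt ^ 2 *ᵥ vt = Qt *ᵥ (Qt *ᵥ vt) := by
        rw [Matrix.mulVec_mulVec, ← pow_two]
      rw [this, h1, h2]
      congr 1
      rw [Matrix.mulVec_sub, hb, Matrix.mulVec_mulVec, ← pow_two, zero_sub]
    | succ n ih =>
      have : Qt ^ (n + 3) *ᵥ vt = Qt *ᵥ (Qt ^ (n + 2) *ᵥ vt) := by
        rw [Matrix.mulVec_mulVec, ← pow_succ']
      rw [this, ih, h2]
      congr 1
      rw [Matrix.mulVec_neg, Matrix.mulVec_mulVec, ← pow_succ']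
  -- the two series
  set F : ℕ → ℝ := fun k => (k ! : ℝ)⁻¹ • (((t • Qt) ^ k *ᵥ vt) (Sum.inl x)) with hF
  set G : ℕ → ℝ := fun k => (k ! : ℝ)⁻¹ • (((t • Q) ^ k *ᵥ e0) x) with hG
  have hFs : Summable F := summable_exp_term _ _ _
  have hGs : Summable G := summable_exp_term _ _ _
  have hsum : ∀ k, F k + G k = if k = 0 then a x else if k = 1 then t * b x else 0 := by
    intro k
    match k with
    | 0 =>
      rw [if_pos rfl]
      simp only [hF, hG, pow_zero, Matrix.one_mulVec, Nat.factorial_zero, Nat.cast_one,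
        inv_one, one_smul]
      simp only [hvt, Sum.elim_inl, Pi.sub_apply, he0]
      ring
    | 1 =>
      rw [if_neg one_ne_zero, if_pos rfl]
      simp only [hF, hG, pow_one, Nat.factorial_one, Nat.cast_one, inv_one, one_smul,
        Matrix.smul_mulVec]
      rw [h1]
      simp only [Sum.elim_inl, Pi.smul_apply, Pi.sub_apply, smul_eq_mul]
      ring
    | (n + 2) =>
      rw [if_neg (by omega), if_neg (by omega), hF, hG]
      simp only [smul_pow, Matrix.smul_mulVec]
      rw [h3 n]
      simp only [Sum.elim_inl, Pi.smul_apply, Pi.neg_apply, smul_eq_mul]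
      ring
  have hFG : ∑' k, (F k + G k) = a x + t * b x := by
    have : ∀ k ∉ ({0, 1} : Finset ℕ), F k + G k = 0 := by
      intro k hk
      simp only [Finset.mem_insert, Finset.mem_singleton, not_or] at hk
      rw [hsum k, if_neg hk.1, if_neg hk.2]
    rw [tsum_eq_sum this]
    rw [Finset.sum_insert (by norm_num), Finset.sum_singleton, hsum 0, hsum 1]
    norm_num
  have hkey : ∑' k, F k = a x + t * b x - ∑' k, G k := by
    have := Summable.tsum_add hFs hGs
    rw [hFG] at this
    linarith
  have hlhs : ((exp (t • Qt)) *ᵥ vt) (Sum.inl x) = ∑' k, F k := exp_mulVec_eq _ _ _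
  have hrhs : ((exp (t • Q)) *ᵥ e0) x = ∑' k, G k := exp_mulVec_eq _ _ _
  have hpos : 0 ≤ ((exp (t • Qt)) *ᵥ vt) (Sum.inl x) := by
    have hQtnn : ∀ p q : ι ⊕ Unit, p ≠ q → 0 ≤ Qt p q := by
      rintro (i | u) (j | u') hpq
      · exact hQ i j (by simpa using hpq)
      · show 0 ≤ r i
        have := hr i
        simp only [hrdef, Pi.sub_apply]
        linarith
      · exact le_refl 0
      · exact le_refl 0
    have hvtnn : ∀ p, 0 ≤ vt p := by
      rintro (i | u)
      · simp only [hvt, Sum.elim_inl, Pi.sub_apply, he0]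
        by_cases h : i = x0
        · subst h
          simp only [Pi.single_eq_same]
          linarith
        · rw [Pi.single_eq_of_ne h]
          simpa using ha i
      · simp [hvt]
    show 0 ≤ ∑ q, exp (t • Qt) (Sum.inl x) q * vt q
    exact Finset.sum_nonneg fun q _ =>
      mul_nonneg (exp_entry_nonneg hQtnn ht _ _) (hvtnn q)
  have hfinal : ((exp (t • Q)) *ᵥ e0) x = exp (t • Q) x x0 := mulVec_single_entry _ _ _
  rw [hlhs, hkey] at hpos
  rw [← hfinal, hrhs]
  linarith

end General

section Sticky

variable {N : ℕ} {M : ℝ}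

theorem stickyRate_nonneg (hM : 0 < M) (x y : Fin (N + 2)) : 0 ≤ stickyRate N M x y := by
  unfold stickyRate
  split_ifs <;> positivity

theorem stickyRate_self (x : Fin (N + 2)) : stickyRate N M x x = 0 := by
  unfold stickyRate
  split_ifs with h1 h2 h3
  · exact absurd h1 (by omega)
  · exact absurd h2 (by omega)
  · exact absurd h3 (by omega)
  · rfl

theorem stickyGen_eq (i j : Fin (N + 2)) :
    stickyGen N M i j
      = stickyRate N M i j - (if i = j then ∑ z, stickyRate N M i z else 0) := by
  by_cases h : i = j
  · subst h
    simp [stickyGen, stickyRate_self]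
  · simp [stickyGen, h]

theorem sum_ite_single {m : Type*} [Fintype m] [DecidableEq m] (c : ℝ) (f : m → ℝ) (u : m) :
    ∑ j, (if j = u then c else 0) * f j = c * f u := by
  simp [ite_mul, Finset.sum_ite_eq']

theorem sum_ite_pair {m : Type*} [Fintype m] [DecidableEq m] (c : ℝ) (f : m → ℝ) {u v : m}
    (huv : u ≠ v) :
    ∑ j, (if j = u ∨ j = v then c else 0) * f j = c * f u + c * f v := by
  have h : ∀ j, (if j = u ∨ j = v then c else 0) * f j
      = (if j = u then c else 0) * f j + (if j = v then c else 0) * f j := by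
    intro j
    by_cases h1 : j = u <;> by_cases h2 : j = v
    · exact absurd (h1 ▸ h2) huv
    · simp [h1, h2, huv]
    · simp [h1, h2, Ne.symm huv]
    · simp [h1, h2]
  rw [Finset.sum_congr rfl fun j _ => h j, Finset.sum_add_distrib,
    sum_ite_single, sum_ite_single]

theorem rate_left {x : Fin (N + 2)} (hx : (x : ℕ) = 0) (j : Fin (N + 2)) :
    stickyRate N M x j = if j = (⟨1, by omega⟩ : Fin (N + 2)) then 1 / (2 * M) else 0 := by
  unfold stickyRate
  rw [if_neg (by omega)]
  by_cases hj : j = (⟨1, by omega⟩ : Fin (N + 2))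
  · subst hj
    rw [if_pos ⟨hx, rfl⟩, if_pos rfl]
  · have hj1 : ¬((x : ℕ) = 0 ∧ (j : ℕ) = 1) := by
      rintro ⟨-, h2⟩
      exact hj (Fin.ext h2)
    rw [if_neg hj1, if_neg (by omega), if_neg hj]

theorem rate_right (hN : 1 ≤ N) {x : Fin (N + 2)} (hx : (x : ℕ) = N + 1) (j : Fin (N + 2)) :
    stickyRate N M x j = if j = (⟨N, by omega⟩ : Fin (N + 2)) then 1 / (2 * M) else 0 := by
  unfold stickyRate
  rw [if_neg (by omega), if_neg (by omega)]
  by_cases hj : j = (⟨N, by omega⟩ : Fin (N + 2))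
  · subst hj
    rw [if_pos ⟨hx, rfl⟩, if_pos rfl]
  · have hj1 : ¬((x : ℕ) = N + 1 ∧ (j : ℕ) = N) := by
      rintro ⟨-, h2⟩
      exact hj (Fin.ext h2)
    rw [if_neg hj1, if_neg hj]

theorem rate_bulk {x : Fin (N + 2)} (h1 : 1 ≤ (x : ℕ)) (h2 : (x : ℕ) ≤ N) (j : Fin (N + 2)) :
    stickyRate N M x j =
      if j = (⟨(x : ℕ) + 1, by omega⟩ : Fin (N + 2))
          ∨ j = (⟨(x : ℕ) - 1, by omega⟩ : Fin (N + 2)) then 1 / 2 else 0 := by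
  unfold stickyRate
  by_cases hc : (j : ℕ) = (x : ℕ) + 1 ∨ (j : ℕ) + 1 = (x : ℕ)
  · rw [if_pos ⟨h1, h2, hc⟩, if_pos ?_]
    rcases hc with hc | hc
    · exact Or.inl (Fin.ext hc)
    · exact Or.inr (Fin.ext (show (j : ℕ) = (x : ℕ) - 1 by omega))
  · have hR : ¬(j = (⟨(x : ℕ) + 1, by omega⟩ : Fin (N + 2))
        ∨ j = (⟨(x : ℕ) - 1, by omega⟩ : Fin (N + 2))) := by
      rintro (rfl | rfl)
      · exact hc (Or.inl rfl)
      · exact hc (Or.inr (show (x : ℕ) - 1 + 1 = (x : ℕ) by omega))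
    rw [if_neg hR, if_neg (by omega), if_neg (by omega), if_neg (by omega)]

end Sticky

noncomputable def aFun (N : ℕ) : Fin (N + 2) → ℝ :=
  fun i => ((N : ℝ) + 1 - ((i : ℕ) : ℝ)) / ((N : ℝ) + 1)

noncomputable def bFun (N : ℕ) (M : ℝ) : Fin (N + 2) → ℝ :=
  fun _ => 1 / (2 * M * ((N : ℝ) + 1))

/-- For the sticky random walk `X` on `{0,…,N+1}` with boundary rates `1/(2M)`,
the transition probability `p_t(N+1, 0) = (e^{tQ})_{N+1,0}` from `N+1` to `0` in time `t`
satisfies `p_t(N+1, 0) ≤ t/(2MN)`. -/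
theorem statement5 (N : ℕ) (hN : 1 ≤ N) (M : ℝ) (hM : 0 < M) (t : ℝ) (ht : 0 ≤ t) :
    NormedSpace.exp (t • stickyGen N M) (Fin.last (N + 1)) 0 ≤ t / (2 * M * N) := by
  have hNR : (1 : ℝ) ≤ (N : ℝ) := by exact_mod_cast hN
  have hN1 : (0 : ℝ) < (N : ℝ) + 1 := by linarith
  -- mulVec decomposition
  have hmul : ∀ (f : Fin (N + 2) → ℝ) (i : Fin (N + 2)),
      (stickyGen N M *ᵥ f) i
        = (∑ j, stickyRate N M i j * f j) - (∑ z, stickyRate N M i z) * f i := by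
    intro f i
    have h0 : (stickyGen N M *ᵥ f) i = ∑ j, stickyGen N M i j * f j := rfl
    rw [h0, Finset.sum_congr rfl fun j _ => by rw [stickyGen_eq, sub_mul]]
    rw [Finset.sum_sub_distrib]
    congr 1
    rw [Finset.sum_congr rfl fun j _ => by rw [ite_mul, zero_mul]]
    rw [Finset.sum_ite_eq]
    simp
  -- hypotheses of the comparison lemma
  have hQ : ∀ i j, i ≠ j → 0 ≤ stickyGen N M i j := by
    intro i j hij
    have : stickyGen N M i j = stickyRate N M i j := by simp [stickyGen, hij]
    rw [this]
    exact stickyRate_nonneg hM i j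
  have ha : ∀ i, 0 ≤ aFun N i := by
    intro i
    have hi : ((i : ℕ) : ℝ) ≤ (N : ℝ) + 1 := by
      have := i.isLt
      have : (i : ℕ) ≤ N + 1 := by omega
      exact_mod_cast this
    unfold aFun
    apply div_nonneg (by linarith) (by linarith)
  have ha0 : 1 ≤ aFun N 0 := by
    unfold aFun
    have h0 : (((0 : Fin (N + 2)) : ℕ) : ℝ) = 0 := by norm_num
    rw [h0, sub_zero, div_self (by linarith)]
  have hbz : stickyGen N M *ᵥ bFun N M = 0 := by
    funext i
    rw [hmul]
    simp only [bFun]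
    rw [← Finset.sum_mul, sub_self]
    rfl
  have hrow : ∀ i, (stickyGen N M *ᵥ aFun N) i ≤ bFun N M i := by
    intro i
    rw [hmul]
    rcases (show (i : ℕ) = 0 ∨ (1 ≤ (i : ℕ) ∧ (i : ℕ) ≤ N) ∨ (i : ℕ) = N + 1 by
        have := i.isLt; omega) with h | ⟨hl, hr'⟩ | h
    · simp only [rate_left h, sum_ite_single, Finset.sum_ite_eq', Finset.mem_univ, if_true]
      simp only [aFun, bFun, h]
      push_cast
      have hkey : 1 / (2 * M) * (((N : ℝ) + 1 - 1) / ((N : ℝ) + 1))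
          - 1 / (2 * M) * (((N : ℝ) + 1 - 0) / ((N : ℝ) + 1))
          = -(1 / (2 * M * ((N : ℝ) + 1))) := by
        field_simp
        ring
      rw [hkey]
      have : 0 < 1 / (2 * M * ((N : ℝ) + 1)) := by positivity
      linarith
    · have hne : (⟨(i : ℕ) + 1, by omega⟩ : Fin (N + 2))
          ≠ (⟨(i : ℕ) - 1, by omega⟩ : Fin (N + 2)) := by
        simp only [ne_eq, Fin.mk.injEq]
        omega
      simp only [rate_bulk hl hr', sum_ite_pair _ _ hne]
      have hrowsum : ∑ z : Fin (N + 2), (if z = (⟨(i : ℕ) + 1, by omega⟩ : Fin (N + 2))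
          ∨ z = (⟨(i : ℕ) - 1, by omega⟩ : Fin (N + 2)) then (1:ℝ)/2 else 0) = 1 := by
        have h2 := sum_ite_pair ((1:ℝ)/2) (fun _ => (1:ℝ)) hne
        simp only [mul_one] at h2
        rw [h2]
        norm_num
      rw [hrowsum]
      simp only [aFun, bFun]
      have hc : (((i : ℕ) - 1 : ℕ) : ℝ) = ((i : ℕ) : ℝ) - 1 := by
        have : (1 : ℕ) ≤ (i : ℕ) := hl
        push_cast [this]
        ring
      push_cast [hc]
      have hkey : 1 / 2 * (((N:ℝ) + 1 - (((i:ℕ):ℝ) + 1)) / ((N:ℝ) + 1))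
          + 1 / 2 * (((N:ℝ) + 1 - (((i:ℕ):ℝ) - 1)) / ((N:ℝ) + 1))
          - 1 * (((N:ℝ) + 1 - ((i:ℕ):ℝ)) / ((N:ℝ) + 1)) = 0 := by
        field_simp
        ring
      rw [hkey]
      positivity
    · simp only [rate_right hN h, sum_ite_single, Finset.sum_ite_eq', Finset.mem_univ, if_true]
      simp only [aFun, bFun, h]
      push_cast
      have hkey : 1 / (2 * M) * (((N : ℝ) + 1 - (N : ℝ)) / ((N : ℝ) + 1))
          - 1 / (2 * M) * (((N : ℝ) + 1 - ((N : ℝ) + 1)) / ((N : ℝ) + 1))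
          = 1 / (2 * M * ((N : ℝ) + 1)) := by
        field_simp
        ring
      rw [hkey]
  have key := comparison (stickyGen N M) hQ (aFun N) (bFun N M) 0 ha ha0 hrow hbz ht
    (Fin.last (N + 1))
  have hlast : aFun N (Fin.last (N + 1)) = 0 := by
    unfold aFun
    rw [Fin.val_last]
    push_cast
    simp
  rw [hlast, zero_add] at key
  have hb' : bFun N M (Fin.last (N + 1)) = 1 / (2 * M * ((N : ℝ) + 1)) := rfl
  rw [hb'] at key
  refine key.trans ?_
  have hNpos : (0 : ℝ) < (N : ℝ) := by linarith
  rw [mul_one_div, div_le_div_iff₀ (by positivity) (by positivity)]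
  have h1 : 2 * M * (N : ℝ) ≤ 2 * M * ((N : ℝ) + 1) := by nlinarith
  exact mul_le_mul_of_nonneg_left h1 ht
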